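/- Let 1 ≤ p ≤ q with n = p+q ≥ 5, and let B : M_{p,q} → (so(p,q))ⁿ be algebraically SO⁺(p,q)-equivariant. Then there exists a function g : (0,∞) → ℝ such that for every x ∈ M_{p,q} (with the additional restriction x₁ > 0 in case p = 1) and all indices μ, i, j: (B_μ(x))_{i,j} = g(‖x‖)·ε(j)·(δ_{μ,j} x_i − δ_{μ,i} x_j), where δ is the Kronecker delta. -/

import Mathlib

open Matrix BigOperators

noncomputable section

/-- `I_{p,q} = diag(1,…,1,−1,…,−1)` with `p` ones and `q` minus-ones. -/
def Ipq (p q : ℕ) : Matrix (Fin (p + q)) (Fin (p + q)) ℝ :=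
  Matrix.diagonal fun i => if (i : ℕ) < p then 1 else -1

/-- The quadratic form `xᵀ I_{p,q} x`. -/
def qform (p q : ℕ) (x : Fin (p + q) → ℝ) : ℝ := x ⬝ᵥ (Ipq p q *ᵥ x)

/-- `‖x‖ = √(xᵀ I_{p,q} x)` for timelike `x`. -/
def pqnorm (p q : ℕ) (x : Fin (p + q) → ℝ) : ℝ := Real.sqrt (qform p q x)

/-- Membership in `SO⁺(p,q)`: preserves `I_{p,q}`, has determinant one, and the
top-left `p×p` block has positive determinant. -/
def SOplus (p q : ℕ) (g : Matrix (Fin (p + q)) (Fin (p + q)) ℝ) : Prop :=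
  gᵀ * Ipq p q * g = Ipq p q ∧ g.det = 1 ∧
    0 < (g.submatrix (Fin.castLE (Nat.le_add_right p q))
          (Fin.castLE (Nat.le_add_right p q))).det

/-- `ε(i) = 1` for `i ≤ p` (0-based: `i < p`) and `−1` otherwise. -/
def epsP (p : ℕ) {n : ℕ} (i : Fin n) : ℝ := if (i : ℕ) < p then 1 else -1


/-- planar matrix: identity except the 2x2 block on rows/cols a,b -/
def pl (n : ℕ) (a b : Fin n) (A B C D : ℝ) : Matrix (Fin n) (Fin n) ℝ :=
  fun k l => if k = a then (if l = a then A else if l = b then B else 0)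
    else if k = b then (if l = a then C else if l = b then D else 0)
    else if k = l then 1 else 0

lemma sum_two {M : Type*} [AddCommMonoid M] {n : ℕ} {a b : Fin n} (hab : a ≠ b) (f : Fin n → M)
    (h : ∀ m, m ≠ a → m ≠ b → f m = 0) : ∑ m, f m = f a + f b := by
  rw [← Finset.sum_subset (Finset.subset_univ {a, b})
    (fun x _ hx => h x (fun h1 => hx (by simp [h1])) (fun h1 => hx (by simp [h1])))]
  exact Finset.sum_pair hab

lemma sum_one {M : Type*} [AddCommMonoid M] {n : ℕ} (a : Fin n) (f : Fin n → M)
    (h : ∀ m, m ≠ a → f m = 0) : ∑ m, f m = f a := by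
  rw [← Finset.sum_subset (Finset.subset_univ {a})
    (fun x _ hx => h x (fun h1 => hx (by simp [h1])))]
  simp

lemma pl_mul {n : ℕ} {a b : Fin n} (hab : a ≠ b) (A B C D A' B' C' D' : ℝ) :
    pl n a b A B C D * pl n a b A' B' C' D' =
      pl n a b (A*A'+B*C') (A*B'+B*D') (C*A'+D*C') (C*B'+D*D') := by
  ext k l
  rw [Matrix.mul_apply]
  by_cases hk : k = a
  · rw [sum_two hab _ (fun m hma hmb => by simp [pl, hk, hma, hmb])]
    simp only [pl, hk, if_pos rfl, if_neg hab, if_neg hab.symm]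
    by_cases hl : l = a <;> by_cases hl' : l = b <;> simp_all <;> ring
  · by_cases hk' : k = b
    · rw [sum_two hab _ (fun m hma hmb => by simp [pl, hk, hk', hma, hmb])]
      simp only [pl, hk, hk', if_pos rfl, if_neg hab, if_neg hab.symm]
      by_cases hl : l = a <;> by_cases hl' : l = b <;> simp_all <;> ring
    · rw [sum_one k _ (fun m hm => by
        simp only [pl, hk, hk', if_neg (Ne.symm hm), if_neg hm]
        by_cases h1 : m = a <;> by_cases h2 : m = b <;> simp_all)]
      simp [pl, hk, hk']

lemma pl_one {n : ℕ} {a b : Fin n} (hab : a ≠ b) : pl n a b 1 0 0 1 = 1 := by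
  ext k l
  simp only [pl, Matrix.one_apply]
  by_cases hk : k = a <;> by_cases hk' : k = b <;> by_cases hl : l = a <;>
    by_cases hl' : l = b <;> simp_all [eq_comm]

lemma pl_transpose {n : ℕ} {a b : Fin n} (hab : a ≠ b) (A B C D : ℝ) :
    (pl n a b A B C D)ᵀ = pl n a b A C B D := by
  ext k l
  simp only [Matrix.transpose_apply, pl]
  by_cases hk : k = a <;> by_cases hk' : k = b <;> by_cases hl : l = a <;>
    by_cases hl' : l = b <;> simp_all [eq_comm]

lemma pl_mulVec {n : ℕ} {a b : Fin n} (hab : a ≠ b) (A B C D : ℝ) (v : Fin n → ℝ) :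
    (pl n a b A B C D) *ᵥ v = fun k =>
      if k = a then A * v a + B * v b else if k = b then C * v a + D * v b else v k := by
  ext k
  rw [Matrix.mulVec, dotProduct]
  by_cases hk : k = a
  · rw [sum_two hab _ (fun m hma hmb => by simp [pl, hk, hma, hmb])]
    simp [pl, hk, hab, hab.symm]
  · by_cases hk' : k = b
    · rw [sum_two hab _ (fun m hma hmb => by simp [pl, hk, hk', hma, hmb])]
      simp [pl, hk, hk', hab, hab.symm]
    · rw [sum_one k _ (fun m hm => by
        simp only [pl, hk, hk', if_neg (Ne.symm hm)]
        by_cases h1 : m = a <;> by_cases h2 : m = b <;> simp_all)]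
      simp [pl, hk, hk']

lemma pl_mul_left {n : ℕ} {a b : Fin n} (hab : a ≠ b) (A B C D : ℝ)
    (M : Matrix (Fin n) (Fin n) ℝ) (k l : Fin n) :
    (pl n a b A B C D * M) k l =
      if k = a then A * M a l + B * M b l else if k = b then C * M a l + D * M b l
      else M k l := by
  rw [Matrix.mul_apply]
  by_cases hk : k = a
  · rw [sum_two hab _ (fun m hma hmb => by simp [pl, hk, hma, hmb])]
    simp [pl, hk, hab, hab.symm]
  · by_cases hk' : k = b
    · rw [sum_two hab _ (fun m hma hmb => by simp [pl, hk, hk', hma, hmb])]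
      simp [pl, hk, hk', hab, hab.symm]
    · rw [sum_one k _ (fun m hm => by
        simp only [pl, hk, hk', if_neg (Ne.symm hm)]
        by_cases h1 : m = a <;> by_cases h2 : m = b <;> simp_all)]
      simp [pl, hk, hk']

lemma pl_mul_right {n : ℕ} {a b : Fin n} (hab : a ≠ b) (A B C D : ℝ)
    (M : Matrix (Fin n) (Fin n) ℝ) (k l : Fin n) :
    (M * pl n a b A B C D) k l =
      if l = a then M k a * A + M k b * C else if l = b then M k a * B + M k b * D
      else M k l := by
  rw [Matrix.mul_apply]
  by_cases hl : l = a
  · rw [sum_two hab _ (fun m hma hmb => by simp [pl, hl, hma, hmb, hab.symm])]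
    simp [pl, hl, hab, hab.symm]
  · by_cases hl' : l = b
    · rw [sum_two hab _ (fun m hma hmb => by simp [pl, hl, hl', hma, hmb, hab])]
      simp [pl, hl, hl', hab, hab.symm]
    · rw [sum_one l _ (fun m hm => by
        simp only [pl, hl, hl']
        by_cases h1 : m = a <;> by_cases h2 : m = b <;> simp_all [Ne.symm hm])]
      simp [pl, hl, hl']
lemma epsP_sq (p : ℕ) {n : ℕ} (i : Fin n) : epsP p i * epsP p i = 1 := by
  unfold epsP; split <;> norm_num

lemma Ipq_eq (p q : ℕ) : Ipq p q = Matrix.diagonal (fun i => epsP p i) := rfl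

lemma Ipq_mul_Ipq (p q : ℕ) : Ipq p q * Ipq p q = 1 := by
  rw [Ipq_eq, Matrix.diagonal_mul_diagonal]
  rw [show (fun i => epsP p i * epsP p i) = fun _ : Fin (p+q) => (1:ℝ) from funext (epsP_sq p), Matrix.diagonal_one]

lemma Ipq_conj_pl (p q : ℕ) {a b : Fin (p+q)} (hab : a ≠ b) (A B C D : ℝ) :
    Ipq p q * pl (p+q) a b A B C D * Ipq p q =
      pl (p+q) a b A (epsP p a * epsP p b * B) (epsP p a * epsP p b * C) D := by
  ext k l
  rw [Ipq_eq, Matrix.mul_diagonal, Matrix.diagonal_mul]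
  simp only [pl]
  by_cases hk : k = a <;> by_cases hk' : k = b <;> by_cases hl : l = a <;>
    by_cases hl' : l = b <;>
    simp_all [epsP_sq, mul_comm, mul_assoc, mul_left_comm] <;>
    simp_all [epsP_sq, mul_comm]

/-- metric condition for planar matrices -/
lemma pl_metric (p q : ℕ) {a b : Fin (p+q)} (hab : a ≠ b) (A B C D e : ℝ)
    (he : epsP p a * epsP p b = e)
    (h1 : A*A + e*C*C = 1) (h2 : A*B + e*C*D = 0)
    (h3 : e*B*A + D*C = 0) (h4 : e*B*B + D*D = 1) :
    (pl (p+q) a b A B C D)ᵀ * Ipq p q * pl (p+q) a b A B C D = Ipq p q := by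
  have key : Ipq p q * (pl (p+q) a b A B C D)ᵀ * Ipq p q * pl (p+q) a b A B C D = 1 := by
    rw [pl_transpose hab, Ipq_conj_pl p q hab, he, pl_mul hab]
    rw [show A*A + (e*C)*C = 1 from by linarith, show A*B + (e*C)*D = 0 from by linarith,
        show (e*B)*A + D*C = 0 from by linarith, show (e*B)*B + D*D = 1 from by linarith]
    exact pl_one hab
  have h5 := congrArg (fun Y => Ipq p q * Y) key
  simpa only [← Matrix.mul_assoc, Ipq_mul_Ipq, Matrix.one_mul, Matrix.mul_one] using h5
set_option maxHeartbeats 2000000 in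
lemma pl_det {n : ℕ} {a b : Fin n} (hab : a ≠ b) (A B C D : ℝ) :
    (pl n a b A B C D).det = A*D - B*C := by
  classical
  set U : Matrix (Fin n) (Fin 2) ℝ :=
    fun k t => if t = 0 then (if k = a then 1 else 0) else (if k = b then 1 else 0) with hU
  set V : Matrix (Fin 2) (Fin n) ℝ :=
    fun t l => if t = 0 then (if l = a then A - 1 else if l = b then B else 0)
      else (if l = a then C else if l = b then D - 1 else 0) with hV
  have hrep : pl n a b A B C D = 1 + U * V := by
    ext k l
    rw [Matrix.add_apply, Matrix.mul_apply, Fin.sum_univ_two]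
    simp only [pl, hU, hV, Matrix.one_apply]
    by_cases hk : k = a <;> by_cases hk' : k = b <;> by_cases hl : l = a <;>
      by_cases hl' : l = b <;> simp_all [eq_comm] <;> ring
  rw [hrep, Matrix.det_one_add_mul_comm]
  have e00 : (V * U) 0 0 = A - 1 := by
    rw [Matrix.mul_apply]
    rw [sum_two hab _ (fun m hma hmb => by simp [hU, hV, hma, hmb])]
    simp [hU, hV, hab.symm]
  have e01 : (V * U) 0 1 = B := by
    rw [Matrix.mul_apply]
    rw [sum_two hab _ (fun m hma hmb => by simp [hU, hV, hma, hmb])]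
    simp [hU, hV, hab, hab.symm]
  have e10 : (V * U) 1 0 = C := by
    rw [Matrix.mul_apply]
    rw [sum_two hab _ (fun m hma hmb => by simp [hU, hV, hma, hmb])]
    simp [hU, hV, hab, hab.symm]
  have e11 : (V * U) 1 1 = D - 1 := by
    rw [Matrix.mul_apply]
    rw [sum_two hab _ (fun m hma hmb => by simp [hU, hV, hma, hmb])]
    simp [hU, hV, hab, hab.symm]
  rw [Matrix.det_fin_two]
  simp only [Matrix.add_apply, Matrix.one_apply, e00, e01, e10, e11]
  norm_num
lemma castLE_eq_iff {p q : ℕ} (k : Fin p) (a : Fin (p+q)) :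
    Fin.castLE (Nat.le_add_right p q) k = a ↔ (k:ℕ) = (a:ℕ) := by
  rw [Fin.ext_iff]; rfl

lemma SO_rot_low (p q : ℕ) {a b : Fin (p+q)} (ha : (a:ℕ) < p) (hb : (b:ℕ) < p)
    (hab : a ≠ b) (c s : ℝ) (h : c^2 + s^2 = 1) :
    SOplus p q (pl (p+q) a b c (-s) s c) := by
  refine ⟨pl_metric p q hab c (-s) s c 1 (by simp [epsP, ha, hb]) (by nlinarith) (by ring)
    (by ring) (by nlinarith), by rw [pl_det hab]; nlinarith, ?_⟩
  have hsub : (pl (p+q) a b c (-s) s c).submatrix (Fin.castLE (Nat.le_add_right p q))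
      (Fin.castLE (Nat.le_add_right p q)) = pl p ⟨a, ha⟩ ⟨b, hb⟩ c (-s) s c := by
    ext k l
    simp only [Matrix.submatrix_apply, pl, castLE_eq_iff, Fin.ext_iff]
    rfl
  rw [hsub, pl_det (by simp [Fin.ext_iff]; omega : (⟨a,ha⟩ : Fin p) ≠ ⟨b,hb⟩)]
  nlinarith

lemma SO_rot_high (p q : ℕ) {a b : Fin (p+q)} (ha : p ≤ (a:ℕ)) (hb : p ≤ (b:ℕ))
    (hab : a ≠ b) (c s : ℝ) (h : c^2 + s^2 = 1) :
    SOplus p q (pl (p+q) a b c (-s) s c) := by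
  refine ⟨pl_metric p q hab c (-s) s c 1
    (by simp [epsP, not_lt.mpr ha, not_lt.mpr hb]) (by nlinarith) (by ring)
    (by ring) (by nlinarith), by rw [pl_det hab]; nlinarith, ?_⟩
  have hsub : (pl (p+q) a b c (-s) s c).submatrix (Fin.castLE (Nat.le_add_right p q))
      (Fin.castLE (Nat.le_add_right p q)) = 1 := by
    ext k l
    have hka : ¬((k:ℕ) = (a:ℕ)) := by omega
    have hkb : ¬((k:ℕ) = (b:ℕ)) := by omega
    simp only [Matrix.submatrix_apply, pl, castLE_eq_iff, hka, hkb, if_false,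
      Matrix.one_apply]
    have : (Fin.castLE (Nat.le_add_right p q) k = Fin.castLE (Nat.le_add_right p q) l)
        ↔ k = l := by rw [Fin.ext_iff, Fin.ext_iff]; rfl
    simp [this, Fin.ext_iff]
  rw [hsub, Matrix.det_one]; norm_num

lemma SO_boost (p q : ℕ) {a b : Fin (p+q)} (ha : (a:ℕ) < p) (hb : p ≤ (b:ℕ))
    (C S : ℝ) (hC : 0 < C) (h : C^2 - S^2 = 1) :
    SOplus p q (pl (p+q) a b C S S C) := by
  have hab : a ≠ b := by intro hh; rw [Fin.ext_iff] at hh; omega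
  refine ⟨pl_metric p q hab C S S C (-1)
    (by simp [epsP, ha, not_lt.mpr hb]) (by nlinarith) (by ring)
    (by ring) (by nlinarith), by rw [pl_det hab]; nlinarith, ?_⟩
  have hsub : (pl (p+q) a b C S S C).submatrix (Fin.castLE (Nat.le_add_right p q))
      (Fin.castLE (Nat.le_add_right p q)) =
      Matrix.diagonal (fun k : Fin p => if k = ⟨a, ha⟩ then C else 1) := by
    ext k l
    have hkb : ¬((k:ℕ) = (b:ℕ)) := by omega
    have hlb : ¬((l:ℕ) = (b:ℕ)) := by omega
    simp only [Matrix.submatrix_apply, pl, castLE_eq_iff, hkb, hlb, if_false,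
      Matrix.diagonal]
    have hcast : (Fin.castLE (Nat.le_add_right p q) k = Fin.castLE (Nat.le_add_right p q) l)
        ↔ k = l := by rw [Fin.ext_iff, Fin.ext_iff]; rfl
    by_cases hka : (k:ℕ) = (a:ℕ) <;> by_cases hla : (l:ℕ) = (a:ℕ) <;>
      by_cases hkl : k = l <;> simp_all [Fin.ext_iff] <;> omega
  rw [hsub, Matrix.det_diagonal]
  rw [Finset.prod_ite_eq' Finset.univ (⟨a, ha⟩ : Fin p) (fun _ => C)]
  simp [hC]
section Basics
variable {p q : ℕ} {Λ : Matrix (Fin (p+q)) (Fin (p+q)) ℝ}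

lemma Ipq_transpose (p q : ℕ) : (Ipq p q)ᵀ = Ipq p q := Matrix.diagonal_transpose _

lemma metric_left_inv (hm : Λᵀ * Ipq p q * Λ = Ipq p q) :
    (Ipq p q * Λᵀ * Ipq p q) * Λ = 1 := by
  calc (Ipq p q * Λᵀ * Ipq p q) * Λ = Ipq p q * (Λᵀ * Ipq p q * Λ) := by
        simp only [Matrix.mul_assoc]
    _ = 1 := by rw [hm, Ipq_mul_Ipq]

lemma metric_inv_eq (hm : Λᵀ * Ipq p q * Λ = Ipq p q) :
    Λ⁻¹ = Ipq p q * Λᵀ * Ipq p q := Matrix.inv_eq_left_inv (metric_left_inv hm)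

lemma metric_inv_mul (hm : Λᵀ * Ipq p q * Λ = Ipq p q) : Λ⁻¹ * Λ = 1 := by
  rw [metric_inv_eq hm]; exact metric_left_inv hm

lemma metric_mul_inv (hm : Λᵀ * Ipq p q * Λ = Ipq p q) : Λ * Λ⁻¹ = 1 := by
  rw [mul_eq_one_comm]; exact metric_inv_mul hm

lemma metric_inv_metric (hm : Λᵀ * Ipq p q * Λ = Ipq p q) :
    (Λ⁻¹)ᵀ * Ipq p q * Λ⁻¹ = Ipq p q := by
  have h1 : Λ * (Ipq p q * Λᵀ * Ipq p q) = 1 := by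
    rw [← metric_inv_eq hm]; exact metric_mul_inv hm
  calc (Λ⁻¹)ᵀ * Ipq p q * Λ⁻¹
      = (Λ⁻¹)ᵀ * (Λᵀ * Ipq p q * Λ) * Λ⁻¹ := by rw [hm]
    _ = (Λ * Λ⁻¹)ᵀ * Ipq p q * (Λ * Λ⁻¹) := by
        simp only [Matrix.transpose_mul, Matrix.mul_assoc]
    _ = Ipq p q := by rw [metric_mul_inv hm]; simp

lemma qform_mulVec (hm : Λᵀ * Ipq p q * Λ = Ipq p q) (x : Fin (p+q) → ℝ) :
    qform p q (Λ *ᵥ x) = qform p q x := by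
  unfold qform
  rw [Matrix.mulVec_mulVec, Matrix.dotProduct_mulVec, Matrix.vecMul_mulVec,
    ← Matrix.mul_assoc, hm]
  rw [show Ipq p q = (Ipq p q)ᵀ from (Ipq_transpose p q).symm, Matrix.vecMul_transpose,
    Ipq_transpose]
  exact dotProduct_comm _ _

end Basics
def FormC (p q : ℕ) (B : (Fin (p + q) → ℝ) → Fin (p + q) → Matrix (Fin (p + q)) (Fin (p + q)) ℝ)
    (c : ℝ) (y : Fin (p+q) → ℝ) : Prop :=
  ∀ μ i j, B y μ i j = c * epsP p j *
    ((if μ = j then 1 else 0) * y i - (if μ = i then 1 else 0) * y j)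

section Prop1
variable {p q : ℕ} {Λ : Matrix (Fin (p+q)) (Fin (p+q)) ℝ}

lemma key1 (hm : Λᵀ * Ipq p q * Λ = Ipq p q) (μ j : Fin (p+q)) :
    ∑ ν, Λ⁻¹ ν μ * (epsP p ν * Λ⁻¹ ν j) = if μ = j then epsP p j else 0 := by
  have h := metric_inv_metric hm
  have h2 := congrFun (congrFun h μ) j
  rw [Matrix.mul_assoc] at h2
  rw [Matrix.mul_apply] at h2
  simp only [Matrix.transpose_apply] at h2
  calc ∑ ν, Λ⁻¹ ν μ * (epsP p ν * Λ⁻¹ ν j)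
      = ∑ ν, Λ⁻¹ ν μ * (Ipq p q * Λ⁻¹) ν j := by
        refine Finset.sum_congr rfl (fun ν _ => ?_)
        rw [Ipq_eq, Matrix.diagonal_mul]
    _ = Ipq p q μ j := h2
    _ = if μ = j then epsP p j else 0 := by
        rw [Ipq_eq]
        by_cases hh : μ = j
        · subst hh; simp [Matrix.diagonal_apply_eq]
        · simp [Matrix.diagonal_apply_ne _ hh, hh]

lemma key2 (hm : Λᵀ * Ipq p q * Λ = Ipq p q) (i μ : Fin (p+q)) :
    ∑ ν, Λ i ν * Λ⁻¹ ν μ = if i = μ then 1 else 0 := by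
  have h := congrFun (congrFun (metric_mul_inv hm) i) μ
  rw [Matrix.mul_apply] at h
  rw [h, Matrix.one_apply]

lemma key3 (hm : Λᵀ * Ipq p q * Λ = Ipq p q) (y : Fin (p+q) → ℝ) (j : Fin (p+q)) :
    ∑ l, epsP p l * y l * Λ⁻¹ l j = epsP p j * (Λ *ᵥ y) j := by
  have hinv := metric_inv_eq hm
  have hentry : ∀ l, Λ⁻¹ l j = epsP p l * Λ j l * epsP p j := by
    intro l
    rw [hinv, Ipq_eq, Matrix.mul_diagonal, Matrix.diagonal_mul, Matrix.transpose_apply]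
  calc ∑ l, epsP p l * y l * Λ⁻¹ l j
      = ∑ l, epsP p j * (Λ j l * y l) := by
        refine Finset.sum_congr rfl (fun l _ => ?_)
        rw [hentry l]
        linear_combination (y l * Λ j l * epsP p j) * epsP_sq p l
    _ = epsP p j * ∑ l, Λ j l * y l := by rw [Finset.mul_sum]
    _ = epsP p j * (Λ *ᵥ y) j := by rw [Matrix.mulVec, dotProduct]

end Prop1

lemma FormC_mulVec {p q : ℕ} {Λ : Matrix (Fin (p+q)) (Fin (p+q)) ℝ}
    (B : (Fin (p + q) → ℝ) → Fin (p + q) → Matrix (Fin (p + q)) (Fin (p + q)) ℝ)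
    (hequiv : ∀ Λ : Matrix (Fin (p + q)) (Fin (p + q)) ℝ, SOplus p q Λ →
      ∀ x, 0 < qform p q x → ∀ μ : Fin (p + q),
        B (Λ *ᵥ x) μ = ∑ ν, Λ⁻¹ ν μ • (Λ * B x ν * Λ⁻¹))
    (hSO : SOplus p q Λ) {y : Fin (p+q) → ℝ} (hy : 0 < qform p q y)
    {c : ℝ} (hF : FormC p q B c y) : FormC p q B c (Λ *ᵥ y) := by
  intro μ i j
  have hm := hSO.1
  rw [hequiv Λ hSO y hy μ, Matrix.sum_apply]
  simp only [Matrix.smul_apply, smul_eq_mul]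
  have inner : ∀ ν l, (Λ * B y ν) i l =
      c * epsP p l * (if ν = l then 1 else 0) * (Λ *ᵥ y) i
        - c * epsP p l * y l * Λ i ν := by
    intro ν l
    rw [Matrix.mul_apply]
    have step : ∀ k, Λ i k * B y ν k l =
        c * epsP p l * (if ν = l then 1 else 0) * (Λ i k * y k)
          - c * epsP p l * y l * (if ν = k then Λ i k else 0) := by
      intro k
      rw [hF ν k l]
      by_cases h1 : ν = l <;> by_cases h2 : ν = k <;> simp [h1, h2] <;> split_ifs <;> ring
    rw [Finset.sum_congr rfl (fun k _ => step k), Finset.sum_sub_distrib]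
    rw [← Finset.mul_sum, ← Finset.mul_sum, Finset.sum_ite_eq]
    simp only [Finset.mem_univ, if_true]
    rw [show ∑ k, Λ i k * y k = (Λ *ᵥ y) i from by rw [Matrix.mulVec, dotProduct]]
  have hout : ∀ ν, (Λ * B y ν * Λ⁻¹) i j =
      c * (Λ *ᵥ y) i * (epsP p ν * Λ⁻¹ ν j) - c * Λ i ν * (epsP p j * (Λ *ᵥ y) j) := by
    intro ν
    rw [Matrix.mul_apply]
    have step : ∀ l, (Λ * B y ν) i l * Λ⁻¹ l j =
        (if ν = l then c * (Λ *ᵥ y) i * (epsP p l * Λ⁻¹ l j) else 0)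
          - c * Λ i ν * (epsP p l * y l * Λ⁻¹ l j) := by
      intro l
      rw [inner ν l]
      by_cases h1 : ν = l <;> simp [h1] <;> (try split_ifs) <;> ring
    rw [Finset.sum_congr rfl (fun l _ => step l), Finset.sum_sub_distrib,
      Finset.sum_ite_eq, ← Finset.mul_sum, key3 hm]
    simp only [Finset.mem_univ, if_true]
    try ring_nf
  rw [Finset.sum_congr rfl (fun ν _ => by rw [hout ν])]
  have expand : ∀ ν, Λ⁻¹ ν μ * (c * (Λ *ᵥ y) i * (epsP p ν * Λ⁻¹ ν j)
      - c * Λ i ν * (epsP p j * (Λ *ᵥ y) j)) =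
      c * (Λ *ᵥ y) i * (Λ⁻¹ ν μ * (epsP p ν * Λ⁻¹ ν j))
        - c * (epsP p j * (Λ *ᵥ y) j) * (Λ i ν * Λ⁻¹ ν μ) := by
    intro ν; ring
  rw [Finset.sum_congr rfl (fun ν _ => expand ν), Finset.sum_sub_distrib,
    ← Finset.mul_sum, ← Finset.mul_sum, key1 hm, key2 hm]
  rw [show ((if i = μ then (1:ℝ) else 0)) = (if μ = i then 1 else 0) from by
    by_cases h : i = μ
    · simp [h]
    · rw [if_neg h, if_neg (fun hh => h (Eq.symm hh))]]
  split_ifs <;> ring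
lemma pl_inv_pair {n : ℕ} {a b : Fin n} (hab : a ≠ b) {A B C D : ℝ}
    (hdet : A*D - B*C = 1) :
    pl n a b A B C D * pl n a b D (-B) (-C) A = 1 := by
  rw [pl_mul hab, show A*D + B*(-C) = 1 from by linarith, show A*(-B) + B*A = 0 from by ring,
    show C*D + D*(-C) = 0 from by ring, show C*(-B) + D*A = 1 from by linarith]
  exact pl_one hab

lemma pl_inv_eq {n : ℕ} {a b : Fin n} (hab : a ≠ b) {A B C D : ℝ}
    (hdet : A*D - B*C = 1) :
    (pl n a b A B C D)⁻¹ = pl n a b D (-B) (-C) A :=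
  Matrix.inv_eq_right_inv (pl_inv_pair hab hdet)

lemma pl_inv_pair' {n : ℕ} {a b : Fin n} (hab : a ≠ b) {A B C D : ℝ}
    (hdet : A*D - B*C = 1) :
    pl n a b D (-B) (-C) A * pl n a b A B C D = 1 := by
  rw [mul_eq_one_comm]; exact pl_inv_pair hab hdet

section Stab
variable {p q : ℕ}
  {B : (Fin (p + q) → ℝ) → Fin (p + q) → Matrix (Fin (p + q)) (Fin (p + q)) ℝ}

lemma equiv_pl
    (hequiv : ∀ Λ : Matrix (Fin (p + q)) (Fin (p + q)) ℝ, SOplus p q Λ →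
      ∀ x, 0 < qform p q x → ∀ μ : Fin (p + q),
        B (Λ *ᵥ x) μ = ∑ ν, Λ⁻¹ ν μ • (Λ * B x ν * Λ⁻¹))
    {x : Fin (p+q) → ℝ} (hq : 0 < qform p q x)
    {a b : Fin (p+q)} (hab : a ≠ b) (hxa : x a = 0) (hxb : x b = 0)
    {A B' C D : ℝ} (hSO : SOplus p q (pl (p+q) a b A B' C D)) (hdet : A*D - B'*C = 1) :
    ∀ μ, B x μ =
      (if μ = a then
        D • (pl (p+q) a b A B' C D * B x a * pl (p+q) a b D (-B') (-C) A)
          + (-C) • (pl (p+q) a b A B' C D * B x b * pl (p+q) a b D (-B') (-C) A)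
       else if μ = b then
        (-B') • (pl (p+q) a b A B' C D * B x a * pl (p+q) a b D (-B') (-C) A)
          + A • (pl (p+q) a b A B' C D * B x b * pl (p+q) a b D (-B') (-C) A)
       else pl (p+q) a b A B' C D * B x μ * pl (p+q) a b D (-B') (-C) A) := by
  intro μ
  have hfix : pl (p+q) a b A B' C D *ᵥ x = x := by
    rw [pl_mulVec hab]
    ext k
    by_cases hk : k = a
    · subst hk; simp [hxa, hxb]
    · by_cases hk' : k = b
      · subst hk'; simp [hxa, hxb]
      · simp [hk, hk']
  have heq := hequiv _ hSO x hq μ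
  rw [hfix, pl_inv_eq hab hdet] at heq
  by_cases hμa : μ = a
  · subst hμa
    rw [sum_two hab _ (fun ν h1 h2 => by
      rw [show pl (p+q) μ b D (-B') (-C) A ν μ = 0 from by simp [pl, h1, h2], zero_smul])]
      at heq
    rw [show pl (p+q) μ b D (-B') (-C) A μ μ = D from by simp [pl],
      show pl (p+q) μ b D (-B') (-C) A b μ = -C from by simp [pl, Ne.symm hab]] at heq
    rw [if_pos rfl]
    exact heq
  · by_cases hμb : μ = b
    · subst hμb
      rw [sum_two hab _ (fun ν h1 h2 => by
        rw [show pl (p+q) a μ D (-B') (-C) A ν μ = 0 from by simp [pl, h1, h2, Ne.symm hμa],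
          zero_smul])] at heq
      rw [show pl (p+q) a μ D (-B') (-C) A a μ = -B' from by simp [pl, hμa],
        show pl (p+q) a μ D (-B') (-C) A μ μ = A from by simp [pl, Ne.symm hab]] at heq
      rw [if_neg hμa, if_pos rfl]
      exact heq
    · rw [sum_one μ _ (fun ν h1 => by
        rw [show pl (p+q) a b D (-B') (-C) A ν μ = 0 from by
          by_cases h2 : ν = a
          · simp [pl, h2, hμa, hμb]
          · by_cases h3 : ν = b
            · simp [pl, h2, h3, hμa, hμb]
            · simp [pl, h2, h3, h1], zero_smul])] at heq
      rw [show pl (p+q) a b D (-B') (-C) A μ μ = 1 from by simp [pl, hμa, hμb],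
        one_smul] at heq
      rw [if_neg hμa, if_neg hμb]
      exact heq

lemma comm_pl
    (hequiv : ∀ Λ : Matrix (Fin (p + q)) (Fin (p + q)) ℝ, SOplus p q Λ →
      ∀ x, 0 < qform p q x → ∀ μ : Fin (p + q),
        B (Λ *ᵥ x) μ = ∑ ν, Λ⁻¹ ν μ • (Λ * B x ν * Λ⁻¹))
    {x : Fin (p+q) → ℝ} (hq : 0 < qform p q x)
    {a b : Fin (p+q)} (hab : a ≠ b) (hxa : x a = 0) (hxb : x b = 0)
    {A B' C D : ℝ} (hSO : SOplus p q (pl (p+q) a b A B' C D)) (hdet : A*D - B'*C = 1)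
    {μ : Fin (p+q)} (hμa : μ ≠ a) (hμb : μ ≠ b) :
    B x μ * pl (p+q) a b A B' C D = pl (p+q) a b A B' C D * B x μ := by
  have h := equiv_pl hequiv hq hab hxa hxb hSO hdet μ
  rw [if_neg hμa, if_neg hμb] at h
  conv_lhs => rw [h]
  rw [Matrix.mul_assoc (pl (p+q) a b A B' C D * B x μ) (pl (p+q) a b D (-B') (-C) A)
    (pl (p+q) a b A B' C D), pl_inv_pair' hab hdet, Matrix.mul_one]

/-- vanishing of off-plane column entries for matrices commuting with a planar matrix -/
lemma comm_entry_zero {n : ℕ} {M : Matrix (Fin n) (Fin n) ℝ} {a b : Fin n} (hab : a ≠ b)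
    {A B' C D : ℝ} (hcomm : M * pl n a b A B' C D = pl n a b A B' C D * M)
    {i : Fin n} (hia : i ≠ a) (hib : i ≠ b)
    (hd : (A-1)*(D-1) - C*B' ≠ 0) (hC : C ≠ 0) :
    M i a = 0 ∧ M i b = 0 := by
  have e1 := congrFun (congrFun hcomm i) a
  have e2 := congrFun (congrFun hcomm i) b
  rw [pl_mul_right hab, pl_mul_left hab] at e1 e2
  simp only [if_pos rfl, if_neg hia, if_neg hib, if_neg hab, if_neg hab.symm,
    ite_true, ite_false] at e1 e2
  -- e1 : M i a * A + M i b * C = M i a ; e2 : M i a * B' + M i b * D = M i b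
  have hx : M i a = 0 := by
    have h0 : ((A-1)*(D-1) - C*B') * M i a = 0 := by linear_combination (D-1)*e1 - C*e2
    rcases mul_eq_zero.mp h0 with h | h
    · exact absurd h hd
    · exact h
  refine ⟨hx, ?_⟩
  have h1 : C * M i b = 0 := by linear_combination e1 - A * hx + hx
  rcases mul_eq_zero.mp h1 with h | h
  · exact absurd h hC
  · exact h

end Stab
def x0 (p q : ℕ) (r : ℝ) : Fin (p+q) → ℝ := fun k => if (k:ℕ) = 0 then r else 0

lemma qform_eq_sum (p q : ℕ) (y : Fin (p+q) → ℝ) :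
    qform p q y = ∑ m, y m * (epsP p m * y m) := by
  unfold qform dotProduct
  refine Finset.sum_congr rfl (fun m _ => ?_)
  rw [Ipq_eq, Matrix.mulVec_diagonal]

lemma qform_x0 (p q : ℕ) (hp : 1 ≤ p) (hn : 5 ≤ p + q) (r : ℝ) :
    qform p q (x0 p q r) = r^2 := by
  rw [qform_eq_sum]
  rw [sum_one (⟨0, by omega⟩ : Fin (p+q)) _ (fun m hm => by
    have : (m:ℕ) ≠ 0 := fun h => hm (Fin.ext h)
    simp [x0, this])]
  have h0p : 0 < p := hp
  simp [x0, epsP, h0p]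
  ring

lemma pick_avoid (p q : ℕ) (hq3 : 3 ≤ q) (u v : Fin (p+q)) :
    ∃ b : Fin (p+q), p ≤ (b:ℕ) ∧ b ≠ u ∧ b ≠ v := by
  have h0 : p < p + q := by omega
  have h1 : p+1 < p+q := by omega
  have h2 : p+2 < p+q := by omega
  by_cases c0 : ((⟨p, h0⟩ : Fin (p+q)) = u ∨ (⟨p, h0⟩ : Fin (p+q)) = v)
  · by_cases c1 : ((⟨p+1, h1⟩ : Fin (p+q)) = u ∨ (⟨p+1, h1⟩ : Fin (p+q)) = v)
    · by_cases c2 : ((⟨p+2, h2⟩ : Fin (p+q)) = u ∨ (⟨p+2, h2⟩ : Fin (p+q)) = v)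
      · exfalso
        simp only [Fin.ext_iff] at c0 c1 c2
        omega
      · push_neg at c2
        exact ⟨_, by simp, c2.1, c2.2⟩
    · push_neg at c1
      exact ⟨_, by simp, c1.1, c1.2⟩
  · push_neg at c0
    exact ⟨_, le_refl p, c0.1, c0.2⟩

section Main
variable {p q : ℕ}
  {B : (Fin (p + q) → ℝ) → Fin (p + q) → Matrix (Fin (p + q)) (Fin (p + q)) ℝ}

lemma ZL1 (hp : 1 ≤ p) (hpq : p ≤ q) (hn : 5 ≤ p + q)
    (hequiv : ∀ Λ : Matrix (Fin (p + q)) (Fin (p + q)) ℝ, SOplus p q Λ →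
      ∀ x, 0 < qform p q x → ∀ μ : Fin (p + q),
        B (Λ *ᵥ x) μ = ∑ ν, Λ⁻¹ ν μ • (Λ * B x ν * Λ⁻¹))
    {r : ℝ} (hr : 0 < r) :
    ∀ μ i j : Fin (p+q), (j:ℕ) ≠ 0 → μ ≠ j → i ≠ j → B (x0 p q r) μ i j = 0 := by
  have hq3 : 3 ≤ q := by omega
  have hq : 0 < qform p q (x0 p q r) := by rw [qform_x0 p q hp hn]; positivity
  have hx : ∀ k : Fin (p+q), (k:ℕ) ≠ 0 → x0 p q r k = 0 := fun k hk => if_neg hk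
  intro μ i j hj hμj hij
  by_cases hjp : (j:ℕ) < p
  · -- boost (j, b) with b in Q avoiding μ, i
    obtain ⟨b, hbQ, hbμ, hbi⟩ := pick_avoid p q hq3 μ i
    have hjb : j ≠ b := fun h => by rw [h] at hjp; omega
    have hSO := SO_boost p q hjp hbQ (5/4) (3/4) (by norm_num) (by norm_num)
    have hcomm := comm_pl hequiv hq hjb (hx j hj) (hx b (by omega))
      hSO (by norm_num) hμj (Ne.symm hbμ)
    exact (comm_entry_zero hjb hcomm hij (Ne.symm hbi) (by norm_num) (by norm_num)).1
  · push_neg at hjp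
    by_cases hex : ∃ b : Fin (p+q), p ≤ (b:ℕ) ∧ b ≠ j ∧ b ≠ μ ∧ b ≠ i
    · obtain ⟨b, hbQ, hbj, hbμ, hbi⟩ := hex
      have hjb : j ≠ b := Ne.symm hbj
      have hSO := SO_rot_high p q hjp hbQ hjb 0 1 (by norm_num)
      have hcomm := comm_pl hequiv hq hjb (hx j hj) (hx b (by omega))
        hSO (by norm_num) hμj (Ne.symm hbμ)
      exact (comm_entry_zero hjb hcomm hij (Ne.symm hbi) (by norm_num) (by norm_num)).1
    · push_neg at hex
      -- every b in Q is one of j, μ, i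
      have hcand : ∀ (k : ℕ) (hk : k < p+q), p ≤ k →
          k = (j:ℕ) ∨ k = (μ:ℕ) ∨ k = (i:ℕ) := by
        intro k hk hpk
        by_cases h1 : (⟨k, hk⟩ : Fin (p+q)) = j
        · left; rw [← h1]
        · by_cases h2 : (⟨k, hk⟩ : Fin (p+q)) = μ
          · right; left; rw [← h2]
          · right; right
            have h3 := hex ⟨k, hk⟩ hpk h1 h2
            rw [Fin.ext_iff] at h3
            exact h3
      by_cases hq4 : 4 ≤ q
      · exfalso
        have e0 := hcand p (by omega) (by omega)
        have e1 := hcand (p+1) (by omega) (by omega)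
        have e2 := hcand (p+2) (by omega) (by omega)
        have e3 := hcand (p+3) (by omega) (by omega)
        omega
      · -- q = 3, so p ≥ 2 and μ, i are both ≥ p > 1
        have hp2 : 2 ≤ p := by omega
        have e0 := hcand p (by omega) (by omega)
        have e1 := hcand (p+1) (by omega) (by omega)
        have e2 := hcand (p+2) (by omega) (by omega)
        have hμp : p ≤ (μ:ℕ) := by omega
        have hip : p ≤ (i:ℕ) := by omega
        have ha1 : ((⟨1, by omega⟩ : Fin (p+q)) : ℕ) < p := hp2
        have haj : (⟨1, by omega⟩ : Fin (p+q)) ≠ j := by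
          intro h; rw [Fin.ext_iff] at h; simp at h; omega
        have hSO := SO_boost p q ha1 hjp (5/4) (3/4) (by norm_num) (by norm_num)
        have hcomm := comm_pl hequiv hq haj (hx _ (by simp)) (hx j hj)
          hSO (by norm_num)
          (by intro h; rw [Fin.ext_iff] at h; simp at h; omega) hμj
        exact (comm_entry_zero haj hcomm
          (by intro h; rw [Fin.ext_iff] at h; simp at h; omega) hij
          (by norm_num) (by norm_num)).2
end Main
section Main2
variable {p q : ℕ}
  {B : (Fin (p + q) → ℝ) → Fin (p + q) → Matrix (Fin (p + q)) (Fin (p + q)) ℝ}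

lemma antisym
    (hso : ∀ x, 0 < qform p q x → ∀ μ, (B x μ)ᵀ * Ipq p q + Ipq p q * B x μ = 0)
    {x : Fin (p+q) → ℝ} (hq : 0 < qform p q x) :
    ∀ μ a b, B x μ b a * epsP p b + epsP p a * B x μ a b = 0 := by
  intro μ a b
  have h := congrFun (congrFun (hso x hq μ) a) b
  rw [Matrix.add_apply, Ipq_eq, Matrix.mul_diagonal, Matrix.diagonal_mul,
    Matrix.transpose_apply, Matrix.zero_apply] at h
  exact h

lemma epsP_ne_zero (p : ℕ) {n : ℕ} (i : Fin n) : epsP p i ≠ 0 := by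
  unfold epsP; split <;> norm_num

lemma diag_eq (hp : 1 ≤ p) (hpq : p ≤ q) (hn : 5 ≤ p + q)
    (hequiv : ∀ Λ : Matrix (Fin (p + q)) (Fin (p + q)) ℝ, SOplus p q Λ →
      ∀ x, 0 < qform p q x → ∀ μ : Fin (p + q),
        B (Λ *ᵥ x) μ = ∑ ν, Λ⁻¹ ν μ • (Λ * B x ν * Λ⁻¹))
    {r : ℝ} (hr : 0 < r) :
    ∀ j : Fin (p+q), (j:ℕ) ≠ 0 →
      epsP p j * B (x0 p q r) j ⟨0, by linarith⟩ j =
        epsP p (⟨p+q-1, by omega⟩ : Fin (p+q)) *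
          B (x0 p q r) ⟨p+q-1, by omega⟩ ⟨0, by linarith⟩ ⟨p+q-1, by omega⟩ := by
  intro j hj
  set o : Fin (p+q) := ⟨0, by linarith⟩ with ho
  set w : Fin (p+q) := ⟨p+q-1, by omega⟩ with hw
  have hq : 0 < qform p q (x0 p q r) := by rw [qform_x0 p q hp hn]; positivity
  have hx : ∀ k : Fin (p+q), (k:ℕ) ≠ 0 → x0 p q r k = 0 := fun k hk => if_neg hk
  have hwQ : p ≤ (w:ℕ) := by simp [hw]; omega
  have hwv : (w:ℕ) = p+q-1 := rfl
  have hov : (o:ℕ) = 0 := rfl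
  by_cases hjw : j = w
  · rw [hjw]
  · have hoj : o ≠ j := fun h => hj (by rw [← h])
    have how : o ≠ w := by
      intro h
      have := congrArg Fin.val h
      rw [hov, hwv] at this
      omega
    have hjwne : j ≠ w := hjw
    have hZ := ZL1 (B := B) hp hpq hn hequiv hr
    by_cases hjp : (j:ℕ) < p
    · -- boost (j, w)
      have hSO := SO_boost p q hjp hwQ (5/4) (3/4) (by norm_num) (by norm_num)
      have hE := equiv_pl hequiv hq hjwne (hx j hj) (hx w (by rw [hwv]; omega))
        hSO (by norm_num) j
      rw [if_pos rfl] at hE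
      have hEo := congrFun (congrFun hE o) j
      rw [Matrix.add_apply, Matrix.smul_apply, Matrix.smul_apply, smul_eq_mul,
        smul_eq_mul] at hEo
      have EV : ∀ ν, (pl (p+q) j w (5/4) (3/4) (3/4) (5/4) * B (x0 p q r) ν *
          pl (p+q) j w (5/4) (-(3/4)) (-(3/4)) (5/4)) o j =
          B (x0 p q r) ν o j * (5/4) + B (x0 p q r) ν o w * (-(3/4)) := by
        intro ν
        rw [Matrix.mul_assoc, pl_mul_left hjwne, if_neg hoj, if_neg how,
          pl_mul_right hjwne, if_pos rfl]
      rw [EV, EV] at hEo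
      have z1 : B (x0 p q r) j o w = 0 := hZ j o w (by rw [hwv]; omega) hjwne how
      have z2 : B (x0 p q r) w o j = 0 := hZ w o j hj (Ne.symm hjwne) hoj
      rw [z1, z2] at hEo
      have hTj : B (x0 p q r) j o j = - B (x0 p q r) w o w := by linarith
      rw [hTj]
      have hej : epsP p j = 1 := by simp [epsP, hjp]
      have hew : epsP p w = -1 := by simp [epsP, hwv]; omega
      rw [hej, hew]; ring
    · -- rotation (j, w)
      push_neg at hjp
      have hSO := SO_rot_high p q hjp hwQ hjwne 0 1 (by norm_num)
      have hE := equiv_pl hequiv hq hjwne (hx j hj) (hx w (by rw [hwv]; omega))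
        hSO (by norm_num) j
      rw [if_pos rfl] at hE
      have hEo := congrFun (congrFun hE o) j
      rw [Matrix.add_apply, Matrix.smul_apply, Matrix.smul_apply, smul_eq_mul,
        smul_eq_mul] at hEo
      have EV : ∀ ν, (pl (p+q) j w 0 (-1) 1 0 * B (x0 p q r) ν *
          pl (p+q) j w 0 (-(-1)) (-1) 0) o j =
          B (x0 p q r) ν o j * 0 + B (x0 p q r) ν o w * (-1) := by
        intro ν
        rw [Matrix.mul_assoc, pl_mul_left hjwne, if_neg hoj, if_neg how,
          pl_mul_right hjwne, if_pos rfl]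
      rw [EV, EV] at hEo
      have hTj : B (x0 p q r) j o j = B (x0 p q r) w o w := by linarith
      rw [hTj]
      have hej : epsP p j = -1 := by simp [epsP]; omega
      have hew : epsP p w = -1 := by simp [epsP, hwv]; omega
      rw [hej, hew]

lemma stab_form (hp : 1 ≤ p) (hpq : p ≤ q) (hn : 5 ≤ p + q)
    (hso : ∀ x, 0 < qform p q x → ∀ μ, (B x μ)ᵀ * Ipq p q + Ipq p q * B x μ = 0)
    (hequiv : ∀ Λ : Matrix (Fin (p + q)) (Fin (p + q)) ℝ, SOplus p q Λ →
      ∀ x, 0 < qform p q x → ∀ μ : Fin (p + q),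
        B (Λ *ᵥ x) μ = ∑ ν, Λ⁻¹ ν μ • (Λ * B x ν * Λ⁻¹))
    {r : ℝ} (hr : 0 < r) :
    FormC p q B
      ((epsP p (⟨p+q-1, by omega⟩ : Fin (p+q)) *
        B (x0 p q r) ⟨p+q-1, by omega⟩ ⟨0, by linarith⟩ ⟨p+q-1, by omega⟩) / r)
      (x0 p q r) := by
  set o : Fin (p+q) := ⟨0, by linarith⟩ with ho
  set w : Fin (p+q) := ⟨p+q-1, by omega⟩ with hw
  set κ : ℝ := epsP p w * B (x0 p q r) w o w with hκ
  set x : Fin (p+q) → ℝ := x0 p q r with hxdef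
  have hq : 0 < qform p q x := by rw [hxdef, qform_x0 p q hp hn]; positivity
  have hZ := ZL1 (B := B) hp hpq hn hequiv hr
  have hA := antisym (B := B) hso hq
  have hD := diag_eq (B := B) hp hpq hn hequiv hr
  have hxo : x o = r := if_pos rfl
  have hx0 : ∀ k : Fin (p+q), (k:ℕ) ≠ 0 → x k = 0 := fun k hk => if_neg hk
  have hTd : ∀ k : Fin (p+q), (k:ℕ) ≠ 0 → B x k o k = epsP p k * κ := by
    intro k hk
    have h := hD k hk
    have he := epsP_sq p (n := p+q) k
    calc B x k o k = epsP p k * (epsP p k * B x k o k) := by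
          rw [← mul_assoc, he, one_mul]
      _ = epsP p k * κ := by rw [h]
  have hAs : ∀ μ a b, B x μ a b = -(epsP p a * epsP p b * B x μ b a) := by
    intro μ a b
    have h := hA μ a b
    have he := epsP_sq p (n := p+q) a
    linear_combination epsP p a * h - B x μ a b * he
  intro μ i j
  by_cases hij : i = j
  · subst hij
    have h := hA μ i i
    have hz : B x μ i i = 0 := by
      have he := epsP_ne_zero p (n := p+q) i
      rcases mul_eq_zero.mp (by linarith : epsP p i * (B x μ i i + B x μ i i) = 0)
        with h' | h'
      · exact absurd h' he
      · linarith
    rw [hz]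
    by_cases hμ : μ = i <;> simp [hμ]
  · by_cases hjo : (j:ℕ) = 0
    · have hjo' : j = o := Fin.ext hjo
      rw [hjo'] at hij ⊢
      have hio : (i:ℕ) ≠ 0 := fun h => hij (Fin.ext h)
      have hεo : epsP p o = 1 := by unfold epsP; exact if_pos hp
      by_cases hμi : μ = i
      · subst hμi
        have hT : B x μ o μ = epsP p μ * κ := hTd μ hio
        have hval : B x μ μ o = - κ := by
          rw [hAs μ μ o, hT, hεo]
          have he := epsP_sq p (n := p+q) μ
          linear_combination (-κ) * he
        rw [hval, if_neg (fun h : μ = o => hio (congrArg Fin.val h)), if_pos rfl,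
          hxo, hx0 μ hio, hεo]
        field_simp
        ring
      · have h0 : B x μ o i = 0 := hZ μ o i hio hμi (Ne.symm hij)
        have : B x μ i o = 0 := by rw [hAs μ i o, h0]; ring
        rw [this, hx0 i hio, if_neg hμi]
        simp
    · by_cases hμj : μ = j
      · subst hμj
        by_cases hio : (i:ℕ) = 0
        · have hio' : i = o := Fin.ext hio
          rw [hio'] at hij ⊢
          have hT : B x μ o μ = epsP p μ * κ := hTd μ hjo
          rw [hT, if_pos rfl, if_neg (fun h : μ = o => hjo (congrArg Fin.val h)), hxo]
          field_simp
          ring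
        · have h1 : B x μ μ i = 0 := hZ μ μ i hio (fun h => hij h.symm) (fun h => hij h.symm)
          have : B x μ i μ = 0 := by rw [hAs μ i μ, h1]; ring
          rw [this, hx0 i hio, if_pos rfl, if_neg (fun h : μ = i => hij h.symm), hx0 μ hjo]
          simp
      · rw [hZ μ i j hjo hμj hij, if_neg hμj, hx0 j hjo]
        simp
end Main2
section Final
variable {p q : ℕ}
  {B : (Fin (p + q) → ℝ) → Fin (p + q) → Matrix (Fin (p + q)) (Fin (p + q)) ℝ}

lemma trans_form (hp : 1 ≤ p) (hpq : p ≤ q) (hn : 5 ≤ p + q)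
    (hequiv : ∀ Λ : Matrix (Fin (p + q)) (Fin (p + q)) ℝ, SOplus p q Λ →
      ∀ x, 0 < qform p q x → ∀ μ : Fin (p + q),
        B (Λ *ᵥ x) μ = ∑ ν, Λ⁻¹ ν μ • (Λ * B x ν * Λ⁻¹))
    (g : ℝ → ℝ) (hg : ∀ r : ℝ, 0 < r → FormC p q B (g r) (x0 p q r)) :
    ∀ y, 0 < qform p q y → (p = 1 → 0 < y ⟨0, by linarith⟩) →
      FormC p q B (g (pqnorm p q y)) y := by
  classical
  set o : Fin (p+q) := ⟨0, by linarith⟩ with ho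
  have hoval : (o:ℕ) = 0 := rfl
  have base : ∀ y : Fin (p+q) → ℝ, (∀ k : Fin (p+q), (k:ℕ) ≠ 0 → y k = 0) →
      0 < y o → FormC p q B (g (pqnorm p q y)) y := by
    intro y hsupp hyo
    have hyx : y = x0 p q (y o) := by
      ext m
      by_cases hm : (m:ℕ) = 0
      · have hmo : m = o := Fin.ext hm
        rw [hmo]; rfl
      · rw [hsupp m hm]; simp [x0, hm]
    have hnorm : pqnorm p q y = y o := by
      have hq2 : qform p q y = (y o)^2 := by
        conv_lhs => rw [hyx]
        rw [qform_x0 p q hp hn]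
      rw [pqnorm, hq2, Real.sqrt_sq (le_of_lt hyo)]
    have h := hg (y o) hyo
    rw [← hyx] at h
    rw [hnorm]
    exact h
  -- single reduction step
  have step : ∀ (Λ : Matrix (Fin (p+q)) (Fin (p+q)) ℝ) (z y : Fin (p+q) → ℝ),
      SOplus p q Λ → Λ *ᵥ z = y → 0 < qform p q y →
      FormC p q B (g (pqnorm p q z)) z → FormC p q B (g (pqnorm p q y)) y := by
    intro Λ z y hSO hzy hqy hFz
    have hqzy : qform p q z = qform p q y := by
      rw [← hzy]; exact (qform_mulVec hSO.1 z).symm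
    have hqz : 0 < qform p q z := by rw [hqzy]; exact hqy
    have hnorm : pqnorm p q z = pqnorm p q y := by rw [pqnorm, pqnorm, hqzy]
    rw [← hnorm, ← hzy]
    exact FormC_mulVec B hequiv hSO hqz hFz
  have key : ∀ (N : ℕ) (y : Fin (p+q) → ℝ),
      2 * (Finset.univ.filter (fun k : Fin (p+q) => (k:ℕ) ≠ 0 ∧ y k ≠ 0)).card
        + (if 0 < y o then 0 else 1) ≤ N →
      0 < qform p q y → (p = 1 → 0 < y o) → FormC p q B (g (pqnorm p q y)) y := by
    intro N
    induction N with
    | zero =>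
      intro y hm hqy hside
      have hyo : 0 < y o := by by_contra h; simp [h] at hm
      have hcard : (Finset.univ.filter
          (fun k : Fin (p+q) => (k:ℕ) ≠ 0 ∧ y k ≠ 0)).card = 0 := by omega
      have hsupp : ∀ k : Fin (p+q), (k:ℕ) ≠ 0 → y k = 0 := by
        intro k hk
        by_contra hyk
        have : k ∈ Finset.univ.filter (fun k : Fin (p+q) => (k:ℕ) ≠ 0 ∧ y k ≠ 0) := by
          simp [hk, hyk]
        rw [Finset.card_eq_zero.mp hcard] at this
        exact absurd this (Finset.notMem_empty k)
      exact base y hsupp hyo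
    | succ N ih =>
      intro y hm hqy hside
      set S := Finset.univ.filter (fun k : Fin (p+q) => (k:ℕ) ≠ 0 ∧ y k ≠ 0) with hS
      by_cases hc1 : ∃ k : Fin (p+q), ((k:ℕ) ≠ 0 ∧ y k ≠ 0) ∧ (k:ℕ) < p
      · -- rotation in plane (o, k), k in the first block
        obtain ⟨k, ⟨hk0, hyk⟩, hkp⟩ := hc1
        have hok : o ≠ k := fun h => hk0 (by rw [← h])
        have hρpos : 0 < (y o)^2 + (y k)^2 := by
          have h1 : 0 < (y k)^2 := by
            rcases lt_or_gt_of_ne hyk with h | h <;> nlinarith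
          nlinarith [sq_nonneg (y o)]
        set ρ := Real.sqrt ((y o)^2 + (y k)^2) with hρ
        have hρ0 : 0 < ρ := Real.sqrt_pos.mpr hρpos
        have hρsq : ρ^2 = (y o)^2 + (y k)^2 := Real.sq_sqrt (le_of_lt hρpos)
        have hcs : (y o / ρ)^2 + (y k / ρ)^2 = 1 := by
          field_simp
          linarith [hρsq]
        have hSO := SO_rot_low p q (show (o:ℕ) < p from hp) hkp hok _ _ hcs
        set z : Fin (p+q) → ℝ := fun m => if m = o then ρ else if m = k then 0 else y m
          with hz
        have hzy : pl (p+q) o k (y o / ρ) (-(y k / ρ)) (y k / ρ) (y o / ρ) *ᵥ z = y := by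
          rw [pl_mulVec hok]
          ext m
          by_cases hmo : m = o
          · subst hmo
            simp only [hz, if_pos rfl, if_neg hok, if_neg (Ne.symm hok), if_true]
            field_simp
            ring
          · by_cases hmk : m = k
            · subst hmk
              simp only [hz, if_pos rfl, if_neg hmo, if_neg (Ne.symm hok), if_neg hok, if_true, if_false]
              field_simp
              ring
            · simp only [hz, if_neg hmo, if_neg hmk]
        have hSz : Finset.univ.filter (fun m : Fin (p+q) => (m:ℕ) ≠ 0 ∧ z m ≠ 0)
            = S.erase k := by
          ext m
          simp only [Finset.mem_filter, Finset.mem_erase, Finset.mem_univ, true_and, hS]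
          constructor
          · rintro ⟨hm0, hzm⟩
            have hmo : m ≠ o := fun h => hm0 (by rw [h])
            by_cases hmk : m = k
            · exfalso; apply hzm; simp [hz, hmk, hmo, Ne.symm hok]
            · refine ⟨hmk, hm0, ?_⟩
              intro hym; apply hzm; simp [hz, hmo, hmk, hym]
          · rintro ⟨hmk, hm0, hym⟩
            have hmo : m ≠ o := fun h => hm0 (by rw [h])
            refine ⟨hm0, ?_⟩
            simp [hz, hmo, hmk]
            exact hym
        have hkS : k ∈ S := by simp [hS, hk0, hyk]
        have hcard : (Finset.univ.filter
            (fun m : Fin (p+q) => (m:ℕ) ≠ 0 ∧ z m ≠ 0)).card = S.card - 1 := by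
          rw [hSz, Finset.card_erase_of_mem hkS]
        have hScard : 1 ≤ S.card := Finset.card_pos.mpr ⟨k, hkS⟩
        have hzq : 0 < qform p q z := by
          rw [show qform p q z = qform p q y from by
            rw [← hzy]; exact (qform_mulVec hSO.1 z).symm]
          exact hqy
        have hzo : 0 < z o := by simp [hz]; exact hρ0
        have hifb : (if 0 < y o then 0 else 1) ≤ 1 := by split <;> omega
        have hFz := ih z (by
          rw [hcard, if_pos hzo]
          omega) hzq (fun _ => hzo)
        exact step _ z y hSO hzy hqy hFz
      · by_cases hc2 : ∃ k l : Fin (p+q), ((k:ℕ) ≠ 0 ∧ y k ≠ 0) ∧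
            ((l:ℕ) ≠ 0 ∧ y l ≠ 0) ∧ k ≠ l
        · -- rotation in plane (k, l), both in second block
          obtain ⟨k, l, ⟨hk0, hyk⟩, ⟨hl0, hyl⟩, hkl⟩ := hc2
          have hkp : p ≤ (k:ℕ) := by
            by_contra h; exact hc1 ⟨k, ⟨hk0, hyk⟩, by omega⟩
          have hlp : p ≤ (l:ℕ) := by
            by_contra h; exact hc1 ⟨l, ⟨hl0, hyl⟩, by omega⟩
          have hρpos : 0 < (y k)^2 + (y l)^2 := by
            have h1 : 0 < (y k)^2 := by
              rcases lt_or_gt_of_ne hyk with h | h <;> nlinarith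
            nlinarith [sq_nonneg (y l)]
          set ρ := Real.sqrt ((y k)^2 + (y l)^2) with hρ
          have hρ0 : 0 < ρ := Real.sqrt_pos.mpr hρpos
          have hρsq : ρ^2 = (y k)^2 + (y l)^2 := Real.sq_sqrt (le_of_lt hρpos)
          have hcs : (y k / ρ)^2 + (y l / ρ)^2 = 1 := by
            field_simp
            linarith [hρsq]
          have hSO := SO_rot_high p q hkp hlp hkl _ _ hcs
          set z : Fin (p+q) → ℝ := fun m => if m = k then ρ else if m = l then 0 else y m
            with hz
          have hzy : pl (p+q) k l (y k / ρ) (-(y l / ρ)) (y l / ρ) (y k / ρ) *ᵥ z = y := by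
            rw [pl_mulVec hkl]
            ext m
            by_cases hmk : m = k
            · subst hmk
              simp only [hz, if_pos rfl, if_neg hkl, if_neg (Ne.symm hkl), if_true]
              field_simp
              ring
            · by_cases hml : m = l
              · subst hml
                simp only [hz, if_pos rfl, if_neg hmk, if_neg (Ne.symm hkl), if_neg hkl, if_true, if_false]
                field_simp
                ring
              · simp only [hz, if_neg hmk, if_neg hml]
          have hSz : Finset.univ.filter (fun m : Fin (p+q) => (m:ℕ) ≠ 0 ∧ z m ≠ 0)
              = S.erase l := by
            ext m
            simp only [Finset.mem_filter, Finset.mem_erase, Finset.mem_univ, true_and, hS]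
            constructor
            · rintro ⟨hm0, hzm⟩
              by_cases hml : m = l
              · exfalso; apply hzm; simp [hz, hml, Ne.symm hkl]
              · refine ⟨hml, hm0, ?_⟩
                intro hym
                by_cases hmk : m = k
                · exact hyk (hmk ▸ hym)
                · exact hzm (by simp [hz, hmk, hml, hym])
            · rintro ⟨hml, hm0, hym⟩
              refine ⟨hm0, ?_⟩
              by_cases hmk : m = k
              · subst hmk; simp [hz]
                exact ne_of_gt hρ0
              · simp [hz, hmk, hml]
                exact hym
          have hlS : l ∈ S := by simp [hS, hl0, hyl]
          have hcard : (Finset.univ.filter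
              (fun m : Fin (p+q) => (m:ℕ) ≠ 0 ∧ z m ≠ 0)).card = S.card - 1 := by
            rw [hSz, Finset.card_erase_of_mem hlS]
          have hScard : 1 ≤ S.card := Finset.card_pos.mpr ⟨l, hlS⟩
          have hzq : 0 < qform p q z := by
            rw [show qform p q z = qform p q y from by
              rw [← hzy]; exact (qform_mulVec hSO.1 z).symm]
            exact hqy
          have hzo : z o = y o := by
            have h1 : o ≠ k := fun h => by rw [← h] at hkp; omega
            have h2 : o ≠ l := fun h => by rw [← h] at hlp; omega
            simp [hz, h1, h2]
          have hifb : (if 0 < y o then 0 else 1) ≤ 1 := by split <;> omega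
          have hFz := ih z (by rw [hcard, hzo]; omega) hzq (fun hp1 => by
            rw [hzo]; exact hside hp1)
          exact step _ z y hSO hzy hqy hFz
        · -- at most one support element, in the second block
          by_cases hyo : 0 < y o
          · by_cases hcS : ∃ k : Fin (p+q), (k:ℕ) ≠ 0 ∧ y k ≠ 0
            · obtain ⟨k, hk0, hyk⟩ := hcS
              have hkp : p ≤ (k:ℕ) := by
                by_contra h; exact hc1 ⟨k, ⟨hk0, hyk⟩, by omega⟩
              have huniq : ∀ m : Fin (p+q), (m:ℕ) ≠ 0 → m ≠ k → y m = 0 := by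
                intro m hm0 hmk
                by_contra hym
                exact hc2 ⟨m, k, ⟨hm0, hym⟩, ⟨hk0, hyk⟩, hmk⟩
              have hok : o ≠ k := fun h => hk0 (by rw [← h])
              have hqsum : qform p q y = (y o)^2 - (y k)^2 := by
                rw [qform_eq_sum]
                rw [sum_two hok _ (fun m hmo hmk => by
                  rw [huniq m (fun h => hmo (Fin.ext h)) hmk]; ring)]
                have heo : epsP p o = 1 := by unfold epsP; exact if_pos hp
                have hek : epsP p k = -1 := by unfold epsP; rw [if_neg (by omega)]
                rw [heo, hek]; ring
              set ρ := pqnorm p q y with hρ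
              have hρ0 : 0 < ρ := Real.sqrt_pos.mpr hqy
              have hρsq : ρ^2 = (y o)^2 - (y k)^2 := by
                rw [hρ, pqnorm, Real.sq_sqrt (le_of_lt hqy), hqsum]
              have hC : 0 < y o / ρ := by positivity
              have hcs : (y o / ρ)^2 - (y k / ρ)^2 = 1 := by
                field_simp
                linarith [hρsq]
              have hSO := SO_boost p q (show (o:ℕ) < p from hp) hkp _ _ hC hcs
              have hzy : pl (p+q) o k (y o / ρ) (y k / ρ) (y k / ρ) (y o / ρ) *ᵥ
                  (x0 p q ρ) = y := by
                rw [pl_mulVec hok]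
                ext m
                have hxoo : x0 p q ρ o = ρ := if_pos rfl
                have hxok : x0 p q ρ k = 0 := if_neg hk0
                by_cases hmo : m = o
                · subst hmo
                  rw [if_pos rfl, hxoo, hxok]
                  field_simp
                  ring
                · by_cases hmk : m = k
                  · subst hmk
                    rw [if_neg hmo, if_pos rfl, hxoo, hxok]
                    field_simp
                    ring
                  · rw [if_neg hmo, if_neg hmk]
                    have hm0 : (m:ℕ) ≠ 0 := fun h => hmo (Fin.ext h)
                    rw [show x0 p q ρ m = 0 from if_neg hm0, huniq m hm0 hmk]
              have hFz := hg ρ hρ0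
              have hstep := step _ (x0 p q ρ) y hSO hzy hqy (by
                rw [show pqnorm p q (x0 p q ρ) = ρ from by
                  rw [pqnorm, qform_x0 p q hp hn, Real.sqrt_sq (le_of_lt hρ0)]]
                exact hFz)
              exact hstep
            · push_neg at hcS
              exact base y hcS hyo
          · -- y o ≤ 0 : flip sign via rotation by π in plane (o, b1)
            have hp2 : 2 ≤ p := by
              by_contra h
              have hp1 : p = 1 := by omega
              exact hyo (hside hp1)
            have hyo0 : y o ≠ 0 := by
              intro h0
              by_cases hcS : ∃ k : Fin (p+q), (k:ℕ) ≠ 0 ∧ y k ≠ 0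
              · obtain ⟨k, hk0, hyk⟩ := hcS
                have hkp : p ≤ (k:ℕ) := by
                  by_contra h; exact hc1 ⟨k, ⟨hk0, hyk⟩, by omega⟩
                have hok : o ≠ k := fun h => hk0 (by rw [← h])
                have huniq : ∀ m : Fin (p+q), (m:ℕ) ≠ 0 → m ≠ k → y m = 0 := by
                  intro m hm0 hmk
                  by_contra hym
                  exact hc2 ⟨m, k, ⟨hm0, hym⟩, ⟨hk0, hyk⟩, hmk⟩
                have hqsum : qform p q y = (y o)^2 - (y k)^2 := by
                  rw [qform_eq_sum]
                  rw [sum_two hok _ (fun m hmo hmk => by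
                    rw [huniq m (fun h => hmo (Fin.ext h)) hmk]; ring)]
                  have heo : epsP p o = 1 := by unfold epsP; exact if_pos hp
                  have hek : epsP p k = -1 := by unfold epsP; rw [if_neg (by omega)]
                  rw [heo, hek]; ring
                rw [hqsum, h0] at hqy
                nlinarith [sq_nonneg (y k)]
              · push_neg at hcS
                have hsupp : ∀ k : Fin (p+q), (k:ℕ) ≠ 0 → y k = 0 := hcS
                have hqsum : qform p q y = (y o)^2 := by
                  rw [qform_eq_sum]
                  rw [sum_one o _ (fun m hmo => by
                    rw [hsupp m (fun h => hmo (Fin.ext h))]; ring)]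
                  have heo : epsP p o = 1 := by unfold epsP; exact if_pos hp
                  rw [heo]; ring
                rw [hqsum, h0] at hqy
                simp at hqy
            set b1 : Fin (p+q) := ⟨1, by omega⟩ with hb1
            have hob : o ≠ b1 := by
              intro h; have := congrArg Fin.val h; simp [hb1, hoval] at this
            have hSO := SO_rot_low p q (show (o:ℕ) < p from hp)
              (show (b1:ℕ) < p from hp2) hob (-1) 0 (by norm_num)
            set z : Fin (p+q) → ℝ := fun m => if m = o then -(y o) else
              if m = b1 then -(y b1) else y m with hz
            have hzy : pl (p+q) o b1 (-1) (-0) 0 (-1) *ᵥ z = y := by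
              rw [pl_mulVec hob]
              ext m
              by_cases hmo : m = o
              · subst hmo
                simp [hz, Ne.symm hob]
              · by_cases hmb : m = b1
                · subst hmb
                  simp [hz, hob, Ne.symm hob, hmo]
                · simp [hz, hmo, hmb]
            have hSz : Finset.univ.filter (fun m : Fin (p+q) => (m:ℕ) ≠ 0 ∧ z m ≠ 0)
                = S := by
              ext m
              simp only [Finset.mem_filter, Finset.mem_univ, true_and, hS]
              constructor
              · rintro ⟨hm0, hzm⟩
                refine ⟨hm0, ?_⟩
                intro hym
                apply hzm
                have hmo : m ≠ o := fun h => hm0 (by rw [h])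
                by_cases hmb : m = b1
                · simp [hz, hmb, Ne.symm hob, neg_eq_zero]
                  exact hmb ▸ hym
                · simp [hz, hmo, hmb, hym]
              · rintro ⟨hm0, hym⟩
                refine ⟨hm0, ?_⟩
                have hmo : m ≠ o := fun h => hm0 (by rw [h])
                by_cases hmb : m = b1
                · simp [hz, hmb, Ne.symm hob, neg_eq_zero]
                  exact hmb ▸ hym
                · simp [hz, hmo, hmb]
                  exact hym
            have hzq : 0 < qform p q z := by
              rw [show qform p q z = qform p q y from by
                rw [← hzy]; exact (qform_mulVec hSO.1 z).symm]
              exact hqy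
            have hzo : 0 < z o := by
              simp only [hz, if_pos rfl]
              rcases lt_or_gt_of_ne hyo0 with h | h
              · linarith
              · exact absurd h hyo
            have hFz := ih z (by
              rw [hSz, if_pos hzo]
              rw [if_neg hyo] at hm
              omega) hzq (fun _ => hzo)
            exact step _ z y hSO hzy hqy hFz
  intro y hqy hside
  exact key _ y (le_refl _) hqy hside
end Final
theorem stmt12 (p q : ℕ) (hp : 1 ≤ p) (hpq : p ≤ q) (hn : 5 ≤ p + q)
    (B : (Fin (p + q) → ℝ) → Fin (p + q) → Matrix (Fin (p + q)) (Fin (p + q)) ℝ)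
    (hso : ∀ x, 0 < qform p q x → ∀ μ, (B x μ)ᵀ * Ipq p q + Ipq p q * B x μ = 0)
    (hequiv : ∀ Λ : Matrix (Fin (p + q)) (Fin (p + q)) ℝ, SOplus p q Λ →
      ∀ x, 0 < qform p q x → ∀ μ : Fin (p + q),
        B (Λ *ᵥ x) μ = ∑ ν, Λ⁻¹ ν μ • (Λ * B x ν * Λ⁻¹)) :
    ∃ g : ℝ → ℝ, ∀ x, 0 < qform p q x → (p = 1 → 0 < x ⟨0, by omega⟩) →
      ∀ μ i j : Fin (p + q),
        (B x μ) i j = g (pqnorm p q x) * epsP p j *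
          ((if μ = j then 1 else 0) * x i - (if μ = i then 1 else 0) * x j) := by
  have hg : ∀ r : ℝ, 0 < r → FormC p q B
      ((epsP p (⟨p+q-1, by omega⟩ : Fin (p+q)) *
        B (x0 p q r) ⟨p+q-1, by omega⟩ ⟨0, by omega⟩ ⟨p+q-1, by omega⟩) / r)
      (x0 p q r) :=
    fun r hr => stab_form hp hpq hn hso hequiv hr
  refine ⟨fun t => (epsP p (⟨p+q-1, by omega⟩ : Fin (p+q)) *
    B (x0 p q t) ⟨p+q-1, by omega⟩ ⟨0, by omega⟩ ⟨p+q-1, by omega⟩) / t, ?_⟩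
  intro x hx hside μ i j
  exact trans_form hp hpq hn hequiv _ hg x hx hside μ i j
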